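/- For an odd prime $q$, $\frac{1}{q^2}\sum_{n \bmod q^2} \left(1 - \frac{1}{q}\left(\frac{n^2-4}{q}\right)\right)^{-1} \cdot w(n) = 1 - \frac{2}{q^2(q-1)}$, where $w(n) = 2$ if $q^2 \mid n^2-4$ and $w(n) = 1 + \left(\frac{n^2-4}{q}\right)$ otherwise. -/

import Mathlib

open Finset

private lemma sum_range_zmod {q : ℕ} [NeZero q] (f : ZMod q → ℝ) :
    ∑ i ∈ Finset.range q, f (i : ZMod q) = ∑ a : ZMod q, f a := by
  refine Finset.sum_nbij' (fun i => (i : ZMod q)) (fun a => a.val) ?_ ?_ ?_ ?_ ?_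
  · intro a _; exact Finset.mem_univ _
  · intro a _; exact Finset.mem_range.mpr a.val_lt
  · intro a ha; exact ZMod.val_natCast_of_lt (Finset.mem_range.mp ha)
  · intro a _; exact ZMod.natCast_rightInverse a
  · intro a _; rfl

private lemma key_char_sum (q : ℕ) [Fact q.Prime] (hq2 : q ≠ 2) :
    ∑ a : ZMod q, (quadraticChar (ZMod q) (a ^ 2 - 4) : ℤ) = -1 := by
  have hchar : ringChar (ZMod q) ≠ 2 := by
    rw [ZMod.ringChar_zmod_n]; exact_mod_cast hq2
  have h2 : (2 : ZMod q) ≠ 0 := by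
    have : ((2 : ℕ) : ZMod q) ≠ 0 := by
      rw [Ne, ZMod.natCast_eq_zero_iff]
      intro h
      exact hq2 ((Nat.prime_dvd_prime_iff_eq (Fact.out) Nat.prime_two).mp h)
    simpa using this
  have h4 : (4 : ZMod q) ≠ 0 := by
    have : (4 : ZMod q) = 2 * 2 := by norm_num
    rw [this]; exact mul_ne_zero h2 h2
  calc ∑ a : ZMod q, (quadraticChar (ZMod q) (a ^ 2 - 4) : ℤ)
      = ∑ a : ZMod q, (quadraticChar (ZMod q) (a - 2) * quadraticChar (ZMod q) (a + 2)) := by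
        refine Finset.sum_congr rfl fun a _ => ?_
        rw [← map_mul]; congr 1; ring
    _ = ∑ a ∈ Finset.univ.erase (2 : ZMod q),
          (quadraticChar (ZMod q) (a - 2) * quadraticChar (ZMod q) (a + 2)) := by
        refine (Finset.sum_erase _ ?_).symm
        simp
    _ = ∑ a ∈ Finset.univ.erase (2 : ZMod q),
          (quadraticChar (ZMod q) (1 + 4 * (a - 2)⁻¹)) := by
        refine Finset.sum_congr rfl fun a ha => ?_
        have ha2 : a - 2 ≠ 0 := sub_ne_zero.mpr (Finset.ne_of_mem_erase ha)
        have key : a + 2 = (a - 2) * (1 + 4 * (a - 2)⁻¹) := by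
          field_simp
          ring
        rw [key, map_mul, ← mul_assoc, ← map_mul, ← sq, quadraticChar_sq_one' ha2, one_mul]
    _ = ∑ u ∈ Finset.univ.erase (1 : ZMod q), (quadraticChar (ZMod q) u) := by
        refine Finset.sum_nbij' (fun a => 1 + 4 * (a - 2)⁻¹) (fun u => 2 + 4 * (u - 1)⁻¹)
          ?_ ?_ ?_ ?_ ?_
        · intro a ha
          have ha2 : a - 2 ≠ 0 := sub_ne_zero.mpr (Finset.ne_of_mem_erase ha)
          refine Finset.mem_erase.mpr ⟨?_, Finset.mem_univ _⟩
          intro h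
          have h0 : (4 : ZMod q) * (a - 2)⁻¹ = 0 := by linear_combination h
          rcases mul_eq_zero.mp h0 with h' | h'
          · exact h4 h'
          · exact ha2 (inv_eq_zero.mp h')
        · intro u hu
          have hu1 : u - 1 ≠ 0 := sub_ne_zero.mpr (Finset.ne_of_mem_erase hu)
          refine Finset.mem_erase.mpr ⟨?_, Finset.mem_univ _⟩
          intro h
          have h0 : (4 : ZMod q) * (u - 1)⁻¹ = 0 := by linear_combination h
          rcases mul_eq_zero.mp h0 with h' | h'
          · exact h4 h'
          · exact hu1 (inv_eq_zero.mp h')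
        · intro a ha
          have ha2 : a - 2 ≠ 0 := sub_ne_zero.mpr (Finset.ne_of_mem_erase ha)
          field_simp
          rw [show a - 2 + 4 - (a - 2) = (4 : ZMod q) by ring, mul_div_cancel_left₀ _ h4]
          ring
        · intro u hu
          have hu1 : u - 1 ≠ 0 := sub_ne_zero.mpr (Finset.ne_of_mem_erase hu)
          show 1 + 4 * (2 + 4 * (u - 1)⁻¹ - 2)⁻¹ = u
          have e1 : (2 + 4 * (u - 1)⁻¹ - 2 : ZMod q) = 4 * (u - 1)⁻¹ := by ring
          rw [e1, mul_inv, inv_inv, ← mul_assoc, mul_inv_cancel₀ h4, one_mul]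
          ring
        · intro a _; rfl
    _ = -1 := by
        rw [Finset.sum_erase_eq_sub (Finset.mem_univ _), quadraticChar_sum_zero hchar]
        simp

private lemma key_char_sq_sum (q : ℕ) [Fact q.Prime] (hq2 : q ≠ 2) :
    ∑ a : ZMod q, ((quadraticChar (ZMod q) (a ^ 2 - 4) : ℤ)) ^ 2 = (q : ℤ) - 2 := by
  have hchar : ringChar (ZMod q) ≠ 2 := by
    rw [ZMod.ringChar_zmod_n]; exact_mod_cast hq2
  have h2 : (2 : ZMod q) ≠ 0 := by
    have : ((2 : ℕ) : ZMod q) ≠ 0 := by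
      rw [Ne, ZMod.natCast_eq_zero_iff]
      intro h
      exact hq2 ((Nat.prime_dvd_prime_iff_eq (Fact.out) Nat.prime_two).mp h)
    simpa using this
  have h4 : (4 : ZMod q) ≠ 0 := by
    have : (4 : ZMod q) = 2 * 2 := by norm_num
    rw [this]; exact mul_ne_zero h2 h2
  have h22 : (2 : ZMod q) ≠ -2 := by
    intro h; apply h4; linear_combination h
  have hfilter : (Finset.univ.filter (fun a : ZMod q => a ^ 2 - 4 = 0)) = {2, -2} := by
    ext a
    simp only [Finset.mem_filter, Finset.mem_univ, true_and, Finset.mem_insert,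
      Finset.mem_singleton]
    constructor
    · intro h
      have h0 : (a - 2) * (a + 2) = 0 := by linear_combination h
      rcases mul_eq_zero.mp h0 with h' | h'
      · exact Or.inl (sub_eq_zero.mp h')
      · exact Or.inr (eq_neg_of_add_eq_zero_left h')
    · rintro (rfl | rfl) <;> ring
  have hfc : (Finset.univ.filter (fun a : ZMod q => a ^ 2 - 4 = 0)).card = 2 := by
    rw [hfilter, Finset.card_insert_of_notMem (by simpa using h22), Finset.card_singleton]
  calc ∑ a : ZMod q, ((quadraticChar (ZMod q) (a ^ 2 - 4) : ℤ)) ^ 2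
      = ∑ a : ZMod q, (if a ^ 2 - 4 = 0 then (0 : ℤ) else 1) := by
        refine Finset.sum_congr rfl fun a _ => ?_
        by_cases h : a ^ 2 - 4 = 0
        · simp [h]
        · rw [if_neg h, quadraticChar_sq_one h]
    _ = (q : ℤ) - 2 := by
        rw [Finset.sum_ite, Finset.sum_const_zero, Finset.sum_const, zero_add, nsmul_eq_mul,
          mul_one, Finset.filter_not, Finset.card_sdiff_of_subset (Finset.filter_subset _ _), hfc,
          Finset.card_univ, ZMod.card]
        have hq3 : 2 ≤ q := (Fact.out : q.Prime).two_le
        omega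


private lemma T_formula (q : ℕ) (hq3 : 3 ≤ q) (c : ℤ) (hc : c = 0 ∨ c = 1 ∨ c = -1) :
    (1 - (1 / (q : ℝ)) * (c : ℝ))⁻¹ * (1 + (c : ℝ))
      = 1 + ((q : ℝ) / ((q : ℝ) - 1)) * (c : ℝ) + (1 / ((q : ℝ) - 1)) * (c : ℝ) ^ 2 := by
  have hq0 : (q : ℝ) ≠ 0 := Nat.cast_ne_zero.mpr (by omega)
  have hq1 : (1 : ℝ) < (q : ℝ) := by exact_mod_cast (by omega : 1 < q)
  have hqm1 : (q : ℝ) - 1 ≠ 0 := ne_of_gt (by linarith)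
  rcases hc with rfl | rfl | rfl
  · push_cast
    field_simp
    ring
  · push_cast
    rw [show (1 : ℝ) - 1 / (q : ℝ) * 1 = ((q : ℝ) - 1) / q by field_simp]
    field_simp
    ring
  · push_cast
    rw [show (1 : ℝ) + (-1 : ℝ) = 0 by ring, mul_zero]
    field_simp
    ring

private lemma T_sum (q : ℕ) [Fact q.Prime] (hq2 : q ≠ 2) :
    ∑ a : ZMod q, (1 - (1 / (q : ℝ)) * ((quadraticChar (ZMod q) (a ^ 2 - 4) : ℤ) : ℝ))⁻¹ *
        (1 + ((quadraticChar (ZMod q) (a ^ 2 - 4) : ℤ) : ℝ))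
      = (q : ℝ) - 2 / ((q : ℝ) - 1) := by
  have hq3 : 3 ≤ q := by
    have := (Fact.out : q.Prime).two_le; omega
  have hq0 : (q : ℝ) ≠ 0 := Nat.cast_ne_zero.mpr (by omega)
  have hq1 : (1 : ℝ) < (q : ℝ) := by exact_mod_cast (by omega : 1 < q)
  have hqm1 : (q : ℝ) - 1 ≠ 0 := ne_of_gt (by linarith)
  have step : ∑ a : ZMod q,
      (1 - (1 / (q : ℝ)) * ((quadraticChar (ZMod q) (a ^ 2 - 4) : ℤ) : ℝ))⁻¹ *
        (1 + ((quadraticChar (ZMod q) (a ^ 2 - 4) : ℤ) : ℝ))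
      = ∑ a : ZMod q, (1 + ((q : ℝ) / ((q : ℝ) - 1)) *
          ((quadraticChar (ZMod q) (a ^ 2 - 4) : ℤ) : ℝ)
          + (1 / ((q : ℝ) - 1)) * ((quadraticChar (ZMod q) (a ^ 2 - 4) : ℤ) : ℝ) ^ 2) :=
    Finset.sum_congr rfl fun a _ =>
      T_formula q hq3 _ (quadraticChar_isQuadratic (ZMod q) (a ^ 2 - 4))
  rw [step, Finset.sum_add_distrib, Finset.sum_add_distrib, Finset.sum_const,
    ← Finset.mul_sum, ← Finset.mul_sum]
  have e1 : ∑ a : ZMod q, ((quadraticChar (ZMod q) (a ^ 2 - 4) : ℤ) : ℝ) = -1 := by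
    rw [← Int.cast_sum, key_char_sum q hq2]; norm_num
  have e2 : ∑ a : ZMod q, ((quadraticChar (ZMod q) (a ^ 2 - 4) : ℤ) : ℝ) ^ 2 = (q : ℝ) - 2 := by
    have h' : ∀ a : ZMod q, ((quadraticChar (ZMod q) (a ^ 2 - 4) : ℤ) : ℝ) ^ 2
        = (((quadraticChar (ZMod q) (a ^ 2 - 4) : ℤ) ^ 2 : ℤ) : ℝ) := fun a => by push_cast; ring
    rw [Finset.sum_congr rfl fun a _ => h' a, ← Int.cast_sum, key_char_sq_sum q hq2]
    push_cast; ring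
  rw [e1, e2, Finset.card_univ, ZMod.card]
  field_simp
  ring

private lemma sum_periodic (q : ℕ) [NeZero q] (f : ZMod q → ℝ) (k : ℕ) :
    ∑ n ∈ Finset.range (k * q), f ((n : ℕ) : ZMod q) = k * ∑ a : ZMod q, f a := by
  induction k with
  | zero => simp
  | succ k ih =>
    rw [Nat.succ_mul, Finset.sum_range_add, ih]
    have h' : ∀ i ∈ Finset.range q, f ((k * q + i : ℕ) : ZMod q) = f ((i : ℕ) : ZMod q) := by
      intro i _; congr 1; push_cast [ZMod.natCast_self]; ring
    rw [Finset.sum_congr rfl h', sum_range_zmod]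
    push_cast; ring

private lemma dvd_char (q : ℕ) (hq : q.Prime) (hq2 : q ≠ 2) (n : ℕ) (hn : n < q ^ 2) :
    (q : ℤ) ^ 2 ∣ (n : ℤ) ^ 2 - 4 ↔ n = 2 ∨ n = q ^ 2 - 2 := by
  have hq3 : 3 ≤ q := by have := hq.two_le; omega
  have hq9 : 9 ≤ q ^ 2 := by nlinarith
  have hqQ : ((q ^ 2 : ℕ) : ℤ) = (q : ℤ) ^ 2 := by push_cast; ring
  have hq9' : (9 : ℤ) ≤ (q : ℤ) ^ 2 := by rw [← hqQ]; exact_mod_cast hq9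
  have hnQ : (n : ℤ) < (q : ℤ) ^ 2 := by rw [← hqQ]; exact_mod_cast hn
  have hn0 : (0 : ℤ) ≤ (n : ℤ) := Int.natCast_nonneg n
  have hqz : Prime (q : ℤ) := Nat.prime_iff_prime_int.mp hq
  constructor
  · intro h
    have hfac : (n : ℤ) ^ 2 - 4 = ((n : ℤ) - 2) * ((n : ℤ) + 2) := by ring
    rw [hfac] at h
    have hnot : ¬ ((q : ℤ) ∣ (n : ℤ) - 2 ∧ (q : ℤ) ∣ (n : ℤ) + 2) := by
      rintro ⟨h1, h2⟩
      have h4 : (q : ℤ) ∣ 4 := by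
        have hd := dvd_sub h2 h1
        rwa [show ((n : ℤ) + 2) - ((n : ℤ) - 2) = 4 by ring] at hd
      have hdd : (q : ℤ) ∣ 2 := hqz.dvd_of_dvd_pow
        (by rwa [show (4 : ℤ) = 2 ^ 2 by norm_num] at h4)
      have : q ∣ 2 := by exact_mod_cast hdd
      exact hq2 ((Nat.prime_dvd_prime_iff_eq hq Nat.prime_two).mp this)
    have hdvd1 : (q : ℤ) ∣ ((n : ℤ) - 2) * ((n : ℤ) + 2) :=
      dvd_trans (dvd_pow_self _ two_ne_zero) h
    rcases hqz.dvd_mul.mp hdvd1 with hA | hB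
    · have hnotB : ¬ (q : ℤ) ∣ (n : ℤ) + 2 := fun hB => hnot ⟨hA, hB⟩
      have hcop : IsCoprime ((q : ℤ) ^ 2) ((n : ℤ) + 2) :=
        ((hqz.coprime_iff_not_dvd).mpr hnotB).pow_left
      have hdd : (q : ℤ) ^ 2 ∣ (n : ℤ) - 2 := hcop.dvd_of_dvd_mul_right h
      left
      rcases hdd with ⟨t, ht⟩
      have htz : t = 0 := by
        rcases lt_trichotomy t 0 with h' | h' | h'
        · have hm : (q : ℤ) ^ 2 * t ≤ (q : ℤ) ^ 2 * (-1) :=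
            mul_le_mul_of_nonneg_left (by omega) (by positivity)
          linarith
        · exact h'
        · have hm : (q : ℤ) ^ 2 * 1 ≤ (q : ℤ) ^ 2 * t :=
            mul_le_mul_of_nonneg_left (by omega) (by positivity)
          linarith
      rw [htz, mul_zero] at ht
      have : (n : ℤ) = 2 := by linarith
      exact_mod_cast this
    · have hnotA : ¬ (q : ℤ) ∣ (n : ℤ) - 2 := fun hA => hnot ⟨hA, hB⟩
      have hcop : IsCoprime ((q : ℤ) ^ 2) ((n : ℤ) - 2) :=
        ((hqz.coprime_iff_not_dvd).mpr hnotA).pow_left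
      have hdd : (q : ℤ) ^ 2 ∣ (n : ℤ) + 2 := hcop.dvd_of_dvd_mul_left h
      right
      rcases hdd with ⟨t, ht⟩
      have htz : t = 1 := by
        rcases lt_trichotomy t 1 with h' | h' | h'
        · have hm : (q : ℤ) ^ 2 * t ≤ (q : ℤ) ^ 2 * 0 :=
            mul_le_mul_of_nonneg_left (by omega) (by positivity)
          linarith
        · exact h'
        · have hm : (q : ℤ) ^ 2 * 2 ≤ (q : ℤ) ^ 2 * t :=
            mul_le_mul_of_nonneg_left (by omega) (by positivity)
          linarith
      rw [htz, mul_one] at ht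
      have hfin : (n : ℤ) = ((q ^ 2 : ℕ) : ℤ) - 2 := by rw [hqQ]; linarith
      omega
  · rintro (rfl | rfl)
    · norm_num
    · have h2q : 2 ≤ q ^ 2 := by omega
      have hcast : ((q ^ 2 - 2 : ℕ) : ℤ) = (q : ℤ) ^ 2 - 2 := by
        rw [Nat.cast_sub h2q]; push_cast; ring
      rw [hcast]
      exact ⟨(q : ℤ) ^ 2 - 4, by ring⟩

theorem fourier_coeff_zero_b_zero (q : ℕ) (hq : q.Prime) (hq2 : q ≠ 2) [Fact q.Prime] :
    (1 / (q : ℝ) ^ 2) * ∑ n ∈ Finset.range (q ^ 2),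
        (1 - (1 / (q : ℝ)) * (legendreSym q ((n : ℤ) ^ 2 - 4) : ℝ))⁻¹ *
          (if (q : ℤ) ^ 2 ∣ (n : ℤ) ^ 2 - 4 then 2
            else 1 + (legendreSym q ((n : ℤ) ^ 2 - 4) : ℝ))
      = 1 - 2 / ((q : ℝ) ^ 2 * ((q : ℝ) - 1)) := by
  have hq3 : 3 ≤ q := by have := hq.two_le; omega
  have hq9 : 9 ≤ q ^ 2 := by nlinarith
  have hq0 : (q : ℝ) ≠ 0 := Nat.cast_ne_zero.mpr (by omega)
  have hq1 : (1 : ℝ) < (q : ℝ) := by exact_mod_cast (by omega : 1 < q)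
  have hqm1 : (q : ℝ) - 1 ≠ 0 := ne_of_gt (by linarith)
  have hleg : ∀ n : ℕ, legendreSym q ((n : ℤ) ^ 2 - 4)
      = quadraticChar (ZMod q) (((n : ZMod q)) ^ 2 - 4) := by
    intro n
    rw [legendreSym]
    congr 1
    push_cast
    ring
  have hsplit : ∀ n : ℕ,
      (1 - (1 / (q : ℝ)) * (legendreSym q ((n : ℤ) ^ 2 - 4) : ℝ))⁻¹ *
        (if (q : ℤ) ^ 2 ∣ (n : ℤ) ^ 2 - 4 then (2 : ℝ)
          else 1 + (legendreSym q ((n : ℤ) ^ 2 - 4) : ℝ))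
      = (1 - (1 / (q : ℝ)) * ((quadraticChar (ZMod q) (((n : ZMod q)) ^ 2 - 4) : ℤ) : ℝ))⁻¹ *
          (1 + ((quadraticChar (ZMod q) (((n : ZMod q)) ^ 2 - 4) : ℤ) : ℝ))
        + (if (q : ℤ) ^ 2 ∣ (n : ℤ) ^ 2 - 4 then (1 : ℝ) else 0) := by
    intro n
    by_cases h : (q : ℤ) ^ 2 ∣ (n : ℤ) ^ 2 - 4
    · have hz : legendreSym q ((n : ℤ) ^ 2 - 4) = 0 := by
        rw [legendreSym.eq_zero_iff]
        exact (ZMod.intCast_zmod_eq_zero_iff_dvd _ q).mpr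
          (dvd_trans (dvd_pow_self (q : ℤ) two_ne_zero) h)
      have hz' : quadraticChar (ZMod q) (((n : ZMod q)) ^ 2 - 4) = 0 := by
        rw [← hleg]; exact hz
      rw [if_pos h, if_pos h, hz, hz']
      norm_num
    · rw [if_neg h, if_neg h, hleg, add_zero]
  rw [Finset.sum_congr rfl fun n _ => hsplit n, Finset.sum_add_distrib]
  have hper : ∑ n ∈ Finset.range (q ^ 2),
      (1 - (1 / (q : ℝ)) * ((quadraticChar (ZMod q) (((n : ZMod q)) ^ 2 - 4) : ℤ) : ℝ))⁻¹ *
        (1 + ((quadraticChar (ZMod q) (((n : ZMod q)) ^ 2 - 4) : ℤ) : ℝ))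
      = q * ((q : ℝ) - 2 / ((q : ℝ) - 1)) := by
    rw [show q ^ 2 = q * q from sq q, sum_periodic q
      (fun a => (1 - (1 / (q : ℝ)) * ((quadraticChar (ZMod q) (a ^ 2 - 4) : ℤ) : ℝ))⁻¹ *
        (1 + ((quadraticChar (ZMod q) (a ^ 2 - 4) : ℤ) : ℝ))) q, T_sum q hq2]
  have hind : ∑ n ∈ Finset.range (q ^ 2),
      (if (q : ℤ) ^ 2 ∣ (n : ℤ) ^ 2 - 4 then (1 : ℝ) else 0) = 2 := by
    have hneq : ∀ n : ℕ, (if n = 2 ∨ n = q ^ 2 - 2 then (1 : ℝ) else 0)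
        = (if n = 2 then (1 : ℝ) else 0) + (if n = q ^ 2 - 2 then (1 : ℝ) else 0) := by
      intro n
      by_cases h1 : n = 2
      · subst h1
        have : (2 : ℕ) ≠ q ^ 2 - 2 := by omega
        simp [this]
      · by_cases h2 : n = q ^ 2 - 2
        · subst h2; simp [h1, show ¬(q ^ 2 - 2 = 2) by omega]
        · simp [h1, h2]
    calc ∑ n ∈ Finset.range (q ^ 2), (if (q : ℤ) ^ 2 ∣ (n : ℤ) ^ 2 - 4 then (1 : ℝ) else 0)
        = ∑ n ∈ Finset.range (q ^ 2),
            ((if n = 2 then (1 : ℝ) else 0) + (if n = q ^ 2 - 2 then (1 : ℝ) else 0)) := by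
          refine Finset.sum_congr rfl fun n hn => ?_
          rw [if_congr (dvd_char q hq hq2 n (Finset.mem_range.mp hn)) rfl rfl, hneq n]
      _ = 2 := by
          rw [Finset.sum_add_distrib, Finset.sum_ite_eq' (Finset.range (q ^ 2)) 2
            (fun _ => (1 : ℝ)), Finset.sum_ite_eq' (Finset.range (q ^ 2)) (q ^ 2 - 2)
            (fun _ => (1 : ℝ)), if_pos (Finset.mem_range.mpr (by omega)),
            if_pos (Finset.mem_range.mpr (by omega))]
          norm_num
  rw [hper, hind]
  field_simp
  ring
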